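/- Let (A,≻,≺) be an anti-dendriform algebra and r ∈ A⊗A skew-symmetric. Then r is a solution of the anti-dendriform Yang-Baxter equation r₁₂·r₁₃ + r₂₃≻r₁₂ - r₁₃≺r₂₃ = 0 if and only if the linear map T_r: A* → A is an O-operator of the associated associative algebra (A,·) with respect to the representation (A*, -R_≺*, -L_≻*), i.e., T_r(u*)·T_r(v*) = T_r(-R_≺*(T_r(u*))v* - L_≻*(T_r(v*))u*) for all u*,v* ∈ A*. -/

import Mathlib

open scoped TensorProduct

/-- An anti-dendriform algebra structure given by bundled bilinear operations
`s` (≻) and `p` (≺). -/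
def IsADAlgL (k : Type*) [Field k] {A : Type*} [AddCommGroup A] [Module k A]
    (s p : A →ₗ[k] A →ₗ[k] A) : Prop :=
  (∀ x y z, s x (s y z) = - s (s x y + p x y) z) ∧
  (∀ x y z, s x (s y z) = - p x (s y z + p y z)) ∧
  (∀ x y z, s x (s y z) = p (p x y) z) ∧
  (∀ x y z, p (s x y) z = s x (p y z))

/-- The linear map `A* → A` associated to `r = ∑ i, a i ⊗ b i`. -/
def Tmap (k : Type*) [Field k] {A : Type*} [AddCommGroup A] [Module k A]
    {ι : Type*} [Fintype ι] (a b : ι → A) (w : Module.Dual k A) : A :=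
  ∑ i, w (a i) • b i

theorem key_lemma {k A : Type*} [Field k] [AddCommGroup A] [Module k A]
    [FiniteDimensional k A] {ι : Type*} [Fintype ι]
    (s p : A →ₗ[k] A →ₗ[k] A) (a b : ι → A)
    (hskew : (∑ i, a i ⊗ₜ[k] b i : A ⊗[k] A) = - ∑ i, b i ⊗ₜ[k] a i)
    (u v w : Module.Dual k A) :
    (∑ i, ∑ j, u (s (a i) (a j)) * (v (b i) * w (b j)))
      + (∑ i, ∑ j, u (p (a i) (a j)) * (v (b i) * w (b j)))
      + (∑ i, ∑ j, u (a j) * (v (s (a i) (b j)) * w (b i)))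
      - (∑ i, ∑ j, u (a i) * (v (a j) * w (p (b i) (b j))))
    = u (s (Tmap k a b v) (Tmap k a b w) + p (Tmap k a b v) (Tmap k a b w)
        - Tmap k a b (-(w ∘ₗ p.flip (Tmap k a b v)) - v ∘ₗ s (Tmap k a b w))) := by
  have skew2 : ∀ f g : Module.Dual k A,
      (∑ i, f (a i) * g (b i)) = -∑ i, f (b i) * g (a i) := fun f g => by
    simpa using congrArg (TensorProduct.lift ((LinearMap.mul k k).compl₁₂ f g)) hskew
  have skewD : ∀ f g : ι → Module.Dual k A,
      (∑ j, ∑ i, (f j) (a i) * (g j) (b i)) = -∑ j, ∑ i, (f j) (b i) * (g j) (a i) := by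
    intro f g
    rw [← Finset.sum_neg_distrib]
    exact Finset.sum_congr rfl fun j _ => skew2 (f j) (g j)

  have c1 : (∑ i, ∑ j, u (s (a i) (a j)) * (v (b i) * w (b j)))
      = ∑ i, ∑ j, v (a i) * (w (a j) * u (s (b i) (b j))) := by
    calc (∑ i, ∑ j, u (s (a i) (a j)) * (v (b i) * w (b j)))
        = ∑ j, ∑ i, (u ∘ₗ s.flip (a j)) (a i) * ((w (b j) • v) (b i)) := by
          rw [Finset.sum_comm]
          refine Finset.sum_congr rfl fun j _ => Finset.sum_congr rfl fun i _ => ?_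
          simp only [LinearMap.coe_comp, Function.comp_apply, LinearMap.flip_apply,
            LinearMap.smul_apply, smul_eq_mul]
          try ring
      _ = -∑ j, ∑ i, (u ∘ₗ s.flip (a j)) (b i) * ((w (b j) • v) (a i)) := skewD _ _
      _ = -∑ i, ∑ j, (u ∘ₗ s (b i)) (a j) * ((v (a i) • w) (b j)) := by
          rw [Finset.sum_comm]
          refine congrArg Neg.neg (Finset.sum_congr rfl fun i _ =>
            Finset.sum_congr rfl fun j _ => ?_)
          simp only [LinearMap.coe_comp, Function.comp_apply, LinearMap.flip_apply,
            LinearMap.smul_apply, smul_eq_mul]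
          try ring
      _ = - -∑ i, ∑ j, (u ∘ₗ s (b i)) (b j) * ((v (a i) • w) (a j)) :=
          congrArg Neg.neg (skewD _ _)
      _ = ∑ i, ∑ j, v (a i) * (w (a j) * u (s (b i) (b j))) := by
          rw [neg_neg]
          refine Finset.sum_congr rfl fun i _ => Finset.sum_congr rfl fun j _ => ?_
          simp only [LinearMap.coe_comp, Function.comp_apply, LinearMap.flip_apply,
            LinearMap.smul_apply, smul_eq_mul]
          try ring
  have c2 : (∑ i, ∑ j, u (p (a i) (a j)) * (v (b i) * w (b j)))
      = ∑ i, ∑ j, v (a i) * (w (a j) * u (p (b i) (b j))) := by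
    calc (∑ i, ∑ j, u (p (a i) (a j)) * (v (b i) * w (b j)))
        = ∑ j, ∑ i, (u ∘ₗ p.flip (a j)) (a i) * ((w (b j) • v) (b i)) := by
          rw [Finset.sum_comm]
          refine Finset.sum_congr rfl fun j _ => Finset.sum_congr rfl fun i _ => ?_
          simp only [LinearMap.coe_comp, Function.comp_apply, LinearMap.flip_apply,
            LinearMap.smul_apply, smul_eq_mul]
          try ring
      _ = -∑ j, ∑ i, (u ∘ₗ p.flip (a j)) (b i) * ((w (b j) • v) (a i)) := skewD _ _
      _ = -∑ i, ∑ j, (u ∘ₗ p (b i)) (a j) * ((v (a i) • w) (b j)) := by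
          rw [Finset.sum_comm]
          refine congrArg Neg.neg (Finset.sum_congr rfl fun i _ =>
            Finset.sum_congr rfl fun j _ => ?_)
          simp only [LinearMap.coe_comp, Function.comp_apply, LinearMap.flip_apply,
            LinearMap.smul_apply, smul_eq_mul]
          try ring
      _ = - -∑ i, ∑ j, (u ∘ₗ p (b i)) (b j) * ((v (a i) • w) (a j)) :=
          congrArg Neg.neg (skewD _ _)
      _ = ∑ i, ∑ j, v (a i) * (w (a j) * u (p (b i) (b j))) := by
          rw [neg_neg]
          refine Finset.sum_congr rfl fun i _ => Finset.sum_congr rfl fun j _ => ?_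
          simp only [LinearMap.coe_comp, Function.comp_apply, LinearMap.flip_apply,
            LinearMap.smul_apply, smul_eq_mul]
          try ring
  have c3 : (∑ i, ∑ j, u (a j) * (v (s (a i) (b j)) * w (b i)))
      = ∑ i, ∑ j, w (a i) * (v (s (b i) (a j)) * u (b j)) := by
    calc (∑ i, ∑ j, u (a j) * (v (s (a i) (b j)) * w (b i)))
        = ∑ j, ∑ i, (v ∘ₗ s.flip (b j)) (a i) * ((u (a j) • w) (b i)) := by
          rw [Finset.sum_comm]
          refine Finset.sum_congr rfl fun j _ => Finset.sum_congr rfl fun i _ => ?_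
          simp only [LinearMap.coe_comp, Function.comp_apply, LinearMap.flip_apply,
            LinearMap.smul_apply, smul_eq_mul]
          try ring
      _ = -∑ j, ∑ i, (v ∘ₗ s.flip (b j)) (b i) * ((u (a j) • w) (a i)) := skewD _ _
      _ = -∑ i, ∑ j, u (a j) * ((w (a i) • (v ∘ₗ s (b i))) (b j)) := by
          rw [Finset.sum_comm]
          refine congrArg Neg.neg (Finset.sum_congr rfl fun i _ =>
            Finset.sum_congr rfl fun j _ => ?_)
          simp only [LinearMap.coe_comp, Function.comp_apply, LinearMap.flip_apply,
            LinearMap.smul_apply, smul_eq_mul]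
          try ring
      _ = - -∑ i, ∑ j, u (b j) * ((w (a i) • (v ∘ₗ s (b i))) (a j)) :=
          congrArg Neg.neg (skewD _ _)
      _ = ∑ i, ∑ j, w (a i) * (v (s (b i) (a j)) * u (b j)) := by
          rw [neg_neg]
          refine Finset.sum_congr rfl fun i _ => Finset.sum_congr rfl fun j _ => ?_
          simp only [LinearMap.coe_comp, Function.comp_apply, LinearMap.flip_apply,
            LinearMap.smul_apply, smul_eq_mul]
          try ring
  have c4 : (∑ i, ∑ j, u (a i) * (v (a j) * w (p (b i) (b j))))
      = -∑ i, ∑ j, v (a i) * (w (p (a j) (b i)) * u (b j)) := by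
    calc (∑ i, ∑ j, u (a i) * (v (a j) * w (p (b i) (b j))))
        = ∑ j, ∑ i, u (a i) * ((v (a j) • (w ∘ₗ p.flip (b j))) (b i)) := by
          rw [Finset.sum_comm]
          refine Finset.sum_congr rfl fun j _ => Finset.sum_congr rfl fun i _ => ?_
          simp only [LinearMap.coe_comp, Function.comp_apply, LinearMap.flip_apply,
            LinearMap.smul_apply, smul_eq_mul]
          try ring
      _ = -∑ j, ∑ i, u (b i) * ((v (a j) • (w ∘ₗ p.flip (b j))) (a i)) := skewD _ _
      _ = -∑ i, ∑ j, v (a i) * (w (p (a j) (b i)) * u (b j)) := by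
          refine congrArg Neg.neg (Finset.sum_congr rfl fun j _ =>
            Finset.sum_congr rfl fun i _ => ?_)
          simp only [LinearMap.coe_comp, Function.comp_apply, LinearMap.flip_apply,
            LinearMap.smul_apply, smul_eq_mul]
          try ring
  rw [c1, c2, c3, c4]
  simp only [map_sub, map_add]
  simp [Tmap, map_sum, Finset.mul_sum, Finset.sum_mul, sub_mul, neg_mul,
    Finset.sum_sub_distrib, Finset.sum_add_distrib, Finset.sum_neg_distrib]
  have d1 : (∑ x, ∑ i, w (a x) * (v (a i) * u (s (b i) (b x))))
      = ∑ i, ∑ j, v (a i) * (w (a j) * u (s (b i) (b j))) :=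
    Finset.sum_comm.trans (Finset.sum_congr rfl fun i _ =>
      Finset.sum_congr rfl fun j _ => by ring)
  have d2 : (∑ x, ∑ i, w (a x) * (v (a i) * u (p (b i) (b x))))
      = ∑ i, ∑ j, v (a i) * (w (a j) * u (p (b i) (b j))) :=
    Finset.sum_comm.trans (Finset.sum_congr rfl fun i _ =>
      Finset.sum_congr rfl fun j _ => by ring)
  have d3 : (∑ x, ∑ i, v (a i) * w (p (a x) (b i)) * u (b x))
      = ∑ i, ∑ j, v (a i) * (w (p (a j) (b i)) * u (b j)) :=
    Finset.sum_comm.trans (Finset.sum_congr rfl fun i _ =>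
      Finset.sum_congr rfl fun j _ => by ring)
  have d4 : (∑ x, ∑ i, w (a i) * v (s (b i) (a x)) * u (b x))
      = ∑ i, ∑ j, w (a i) * (v (s (b i) (a j)) * u (b j)) :=
    Finset.sum_comm.trans (Finset.sum_congr rfl fun i _ =>
      Finset.sum_congr rfl fun j _ => by ring)
  rw [d1, d2, d3, d4]
  ring

theorem stmt10 {k A : Type*} [Field k] [AddCommGroup A] [Module k A]
    [FiniteDimensional k A] {ι : Type*} [Fintype ι]
    (s p : A →ₗ[k] A →ₗ[k] A) (hA : IsADAlgL k s p) (a b : ι → A)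
    (hskew : (∑ i, a i ⊗ₜ[k] b i : A ⊗[k] A) = - ∑ i, b i ⊗ₜ[k] a i) :
    -- r₁₂·r₁₃ + r₂₃≻r₁₂ - r₁₃≺r₂₃ = 0
    ((∑ i, ∑ j, (s (a i) (a j) + p (a i) (a j)) ⊗ₜ[k] (b i ⊗ₜ[k] b j))
      + (∑ i, ∑ j, a j ⊗ₜ[k] (s (a i) (b j) ⊗ₜ[k] b i))
      - (∑ i, ∑ j, a i ⊗ₜ[k] (a j ⊗ₜ[k] p (b i) (b j)))
      = (0 : A ⊗[k] (A ⊗[k] A)))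
    ↔
    -- T_r is an O-operator of (A,·) w.r.t. (A*, -R_≺*, -L_≻*)
    (∀ u v : Module.Dual k A,
      s (Tmap k a b u) (Tmap k a b v) + p (Tmap k a b u) (Tmap k a b v)
        = Tmap k a b (-(v ∘ₗ p.flip (Tmap k a b u)) - u ∘ₗ s (Tmap k a b v))) := by
  constructor
  · intro hE u v
    rw [← sub_eq_zero]
    rw [← Module.forall_dual_apply_eq_zero_iff k]
    intro f
    rw [← key_lemma s p a b hskew f u v]
    have h0 := congrArg (TensorProduct.lift ((LinearMap.mul k k).compl₁₂ f
      (TensorProduct.lift ((LinearMap.mul k k).compl₁₂ u v)))) hE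
    simp only [map_sum, map_add, map_sub, map_zero, TensorProduct.lift.tmul,
      TensorProduct.add_tmul, LinearMap.compl₁₂_apply, LinearMap.mul_apply',
      add_mul, Finset.sum_add_distrib] at h0 ⊢
    linear_combination h0
  · intro hO
    have hD : ∀ u v : Module.Dual k A,
        s (Tmap k a b u) (Tmap k a b v) + p (Tmap k a b u) (Tmap k a b v)
          - Tmap k a b (-(v ∘ₗ p.flip (Tmap k a b u)) - u ∘ₗ s (Tmap k a b v)) = 0 :=
      fun u v => sub_eq_zero.mpr (hO u v)
    set B := Module.finBasis k A with hB
    refine (B.tensorProduct (B.tensorProduct B)).ext_elem fun idx => ?_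
    obtain ⟨i, j, l⟩ := idx
    have hk := key_lemma s p a b hskew (B.coord i) (B.coord j) (B.coord l)
    rw [hD (B.coord j) (B.coord l), map_zero] at hk
    simp only [map_sum, map_add, map_sub, map_zero, TensorProduct.add_tmul,
      Module.Basis.tensorProduct_repr_tmul_apply, Finsupp.coe_finset_sum, Finset.sum_apply,
      Finsupp.add_apply, Finsupp.sub_apply, Finsupp.coe_zero, Pi.zero_apply,
      Module.Basis.coord_apply, smul_eq_mul, add_mul, Finset.sum_add_distrib] at hk ⊢
    have e1 : (∑ x : ι, ∑ y : ι, (B.repr (b y)) l * (B.repr (b x)) j * (B.repr (s (a x) (a y))) i)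
        = ∑ x : ι, ∑ y : ι, (B.repr (s (a x) (a y))) i * ((B.repr (b x)) j * (B.repr (b y)) l) :=
      Finset.sum_congr rfl fun _ _ => Finset.sum_congr rfl fun _ _ => by ring
    have e2 : (∑ x : ι, ∑ y : ι, (B.repr (b y)) l * (B.repr (b x)) j * (B.repr (p (a x) (a y))) i)
        = ∑ x : ι, ∑ y : ι, (B.repr (p (a x) (a y))) i * ((B.repr (b x)) j * (B.repr (b y)) l) :=
      Finset.sum_congr rfl fun _ _ => Finset.sum_congr rfl fun _ _ => by ring
    have e3 : (∑ x : ι, ∑ y : ι, (B.repr (b x)) l * (B.repr (s (a x) (b y))) j * (B.repr (a y)) i)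
        = ∑ x : ι, ∑ y : ι, (B.repr (a y)) i * ((B.repr (s (a x) (b y))) j * (B.repr (b x)) l) :=
      Finset.sum_congr rfl fun _ _ => Finset.sum_congr rfl fun _ _ => by ring
    have e4 : (∑ x : ι, ∑ y : ι, (B.repr (p (b x) (b y))) l * (B.repr (a y)) j * (B.repr (a x)) i)
        = ∑ x : ι, ∑ y : ι, (B.repr (a x)) i * ((B.repr (a y)) j * (B.repr (p (b x) (b y))) l) :=
      Finset.sum_congr rfl fun _ _ => Finset.sum_congr rfl fun _ _ => by ring
    rw [e1, e2, e3, e4]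
    linear_combination hk
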